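/- With N₀(E) = (b₁⋯b_m/(2π)^m)(ω_n/(2π)^n) Σ_{q≥0} μ_q (E − Λ_q)_+^{n/2} for m ≥ 1, n ≥ 1 (and the analogous formulas for m = 0 or n = 0), one has lim_{E→∞} E^{−d/2} N₀(E) = ω_d/(2π)^d where d = 2m + n; i.e., the semiclassical coefficient is independent of the magnetic field. -/

import Mathlib

open Filter Real
open MeasureTheory intervalIntegral

/-- `ω_k = π^{k/2}/Γ(k/2+1)`, the volume of the unit ball in `ℝ^k`. -/
noncomputable def unitBallVol (k : ℕ) : ℝ :=
  π ^ ((k : ℝ) / 2) / Real.Gamma ((k : ℝ) / 2 + 1)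

lemma my_nonneg {g : ℝ → ℝ} (hmono : Monotone g) (h0 : ∀ x ≤ 0, g x = 0) (x : ℝ) : 0 ≤ g x := by
  rcases le_or_gt x 0 with h | h
  · exact (h0 x h).ge
  · have := hmono h.le
    rwa [h0 0 le_rfl] at this

lemma cesaro_int {g : ℝ → ℝ} (hmono : Monotone g) (h0 : ∀ x ≤ 0, g x = 0)
    {α C : ℝ} (hα : 0 < α)
    (hlim : Tendsto (fun E => g E / E ^ α) atTop (nhds C)) :
    Tendsto (fun E => (∫ t in (0:ℝ)..E, g t) / E ^ (α + 1)) atTop (nhds (C / (α + 1))) := by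
  have hα1 : (0:ℝ) < α + 1 := by linarith
  rw [Metric.tendsto_nhds]
  intro ε hε
  set δ : ℝ := ε * (α + 1) / 4 with hδdef
  have hδ : 0 < δ := by positivity
  obtain ⟨N, hN⟩ := (Metric.tendsto_atTop.1 hlim) δ hδ
  set M : ℝ := max N 1 with hMdef
  have hM1 : (1:ℝ) ≤ M := le_max_right _ _
  have hM0 : (0:ℝ) < M := by linarith
  -- pointwise bounds for t ≥ M
  have hbound : ∀ t, M ≤ t → (C - δ) * t ^ α ≤ g t ∧ g t ≤ (C + δ) * t ^ α := by
    intro t ht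
    have ht0 : (0:ℝ) < t := lt_of_lt_of_le hM0 ht
    have htα : (0:ℝ) < t ^ α := rpow_pos_of_pos ht0 α
    have := hN t (le_trans (le_max_left _ _) ht)
    rw [Real.dist_eq, abs_sub_lt_iff] at this
    constructor
    · have : C - δ < g t / t ^ α := by linarith [this.2]
      calc (C - δ) * t ^ α ≤ (g t / t ^ α) * t ^ α := by nlinarith
        _ = g t := by field_simp
    · have : g t / t ^ α < C + δ := by linarith [this.1]
      calc g t = (g t / t ^ α) * t ^ α := by field_simp
        _ ≤ (C + δ) * t ^ α := by nlinarith
  set A : ℝ := |∫ t in (0:ℝ)..M, g t| + |C| * M ^ (α + 1) / (α + 1) with hAdef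
  have hA0 : 0 ≤ A := by positivity
  -- A / E^(α+1) → 0
  have hAsmall : ∀ᶠ E in atTop, A / E ^ (α + 1) < ε / 2 := by
    have h1 : Tendsto (fun E : ℝ => E ^ (α + 1)) atTop atTop := tendsto_rpow_atTop hα1
    have h2 : Tendsto (fun E : ℝ => A / E ^ (α + 1)) atTop (nhds 0) := by
      simpa [div_eq_mul_inv] using (h1.inv_tendsto_atTop).const_mul A
    exact h2.eventually_lt_const (by positivity)
  filter_upwards [eventually_ge_atTop M, hAsmall] with E hEM hEsmall
  have hE0 : (0:ℝ) < E := lt_of_lt_of_le hM0 hEM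
  have hP : (0:ℝ) < E ^ (α + 1) := rpow_pos_of_pos hE0 _
  have hQ0 : (0:ℝ) ≤ M ^ (α + 1) := (rpow_pos_of_pos hM0 _).le
  have hQP : M ^ (α + 1) ≤ E ^ (α + 1) := rpow_le_rpow hM0.le hEM hα1.le
  -- split the integral
  have hi1 : IntervalIntegrable g volume 0 M := hmono.intervalIntegrable
  have hi2 : IntervalIntegrable g volume M E := hmono.intervalIntegrable
  have hirpow : IntervalIntegrable (fun t : ℝ => t ^ α) volume M E :=
    intervalIntegral.intervalIntegrable_rpow (Or.inl hα.le)
  have hsplit : (∫ t in (0:ℝ)..E, g t) = (∫ t in (0:ℝ)..M, g t) + ∫ t in M..E, g t :=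
    (intervalIntegral.integral_add_adjacent_intervals hi1 hi2).symm
  have hrpowint : (∫ t in M..E, t ^ α) = (E ^ (α + 1) - M ^ (α + 1)) / (α + 1) :=
    integral_rpow (Or.inl (by linarith))
  have hup : (∫ t in M..E, g t) ≤ (C + δ) * ((E ^ (α + 1) - M ^ (α + 1)) / (α + 1)) := by
    calc (∫ t in M..E, g t) ≤ ∫ t in M..E, (C + δ) * t ^ α := by
          apply intervalIntegral.integral_mono_on hEM hi2 (hirpow.const_mul _)
          intro t ht
          exact (hbound t ht.1).2
      _ = (C + δ) * ((E ^ (α + 1) - M ^ (α + 1)) / (α + 1)) := by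
          rw [intervalIntegral.integral_const_mul, hrpowint]
  have hlo : (C - δ) * ((E ^ (α + 1) - M ^ (α + 1)) / (α + 1)) ≤ ∫ t in M..E, g t := by
    calc (C - δ) * ((E ^ (α + 1) - M ^ (α + 1)) / (α + 1))
        = ∫ t in M..E, (C - δ) * t ^ α := by
          rw [intervalIntegral.integral_const_mul, hrpowint]
      _ ≤ ∫ t in M..E, g t := by
          apply intervalIntegral.integral_mono_on hEM (hirpow.const_mul _) hi2
          intro t ht
          exact (hbound t ht.1).1
  -- key absolute bound
  set I0 : ℝ := ∫ t in (0:ℝ)..M, g t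
  set J : ℝ := ∫ t in M..E, g t
  set P : ℝ := E ^ (α + 1)
  set Q : ℝ := M ^ (α + 1)
  have hβ : (0:ℝ) < (α + 1)⁻¹ := inv_pos.2 hα1
  have habs : |I0 + J - C / (α + 1) * P| ≤ δ / (α + 1) * P + A := by
    have h1 : -I0 ≤ |I0| := neg_le_abs _
    have h2 : I0 ≤ |I0| := le_abs_self _
    have ha : (0:ℝ) ≤ δ * (Q * (α + 1)⁻¹) := by positivity
    have hb : (0:ℝ) ≤ (|C| + C) * (Q * (α + 1)⁻¹) := by
      have : (0:ℝ) ≤ |C| + C := by linarith [neg_le_abs C]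
      positivity
    have hc : (0:ℝ) ≤ (|C| - C) * (Q * (α + 1)⁻¹) := by
      have : (0:ℝ) ≤ |C| - C := by linarith [le_abs_self C]
      positivity
    rw [hAdef]
    simp only [div_eq_mul_inv] at hup hlo ⊢
    rw [abs_le]
    constructor
    · nlinarith [hlo, ha, hb, hc, h1, h2]
    · nlinarith [hup, ha, hb, hc, h1, h2]
  have hδα : δ / (α + 1) = ε / 4 := by
    rw [hδdef]; field_simp
  rw [Real.dist_eq, hsplit]
  have heq : (I0 + J) / P - C / (α + 1) = (I0 + J - C / (α + 1) * P) / P := by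
    field_simp
  rw [heq, abs_div, abs_of_pos hP]
  calc |I0 + J - C / (α + 1) * P| / P ≤ (δ / (α + 1) * P + A) / P := by gcongr
    _ = δ / (α + 1) + A / P := by
        rw [add_div, mul_div_assoc, div_self hP.ne', mul_one]
    _ < ε := by rw [hδα]; linarith

section step
variable {g : ℝ → ℝ} {c : ℝ}

lemma vanish_step (h0 : ∀ x ≤ 0, g x = 0) (hc : 0 < c) (E : ℝ) :
    ∀ k ∉ Finset.range (⌈E / c⌉₊ + 1), g (E - c * k) = 0 := by
  intro k hk
  rw [Finset.mem_range, not_lt] at hk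
  apply h0
  have h1 : E / c ≤ (⌈E / c⌉₊ : ℝ) := Nat.le_ceil _
  have h2 : ((⌈E / c⌉₊ + 1 : ℕ) : ℝ) ≤ (k : ℝ) := by exact_mod_cast hk
  push_cast at h2
  have : E / c ≤ (k : ℝ) := by linarith
  have := (div_le_iff₀ hc).1 this
  linarith [this]

lemma summable_step (h0 : ∀ x ≤ 0, g x = 0) (hc : 0 < c) (E : ℝ) :
    Summable (fun k : ℕ => g (E - c * k)) :=
  summable_of_ne_finset_zero (vanish_step h0 hc E)

lemma mono_step (hmono : Monotone g) (h0 : ∀ x ≤ 0, g x = 0) (hc : 0 < c) :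
    Monotone (fun E => ∑' k : ℕ, g (E - c * k)) := by
  intro E E' h
  refine Summable.tsum_le_tsum (fun k => hmono ?_) (summable_step h0 hc E) (summable_step h0 hc E')
  have : (0:ℝ) ≤ c * k := by positivity
  linarith

lemma zero_step (h0 : ∀ x ≤ 0, g x = 0) {E : ℝ} (hE : E ≤ 0) (hc : 0 < c) :
    (∑' k : ℕ, g (E - c * k)) = 0 := by
  have h : ∀ k : ℕ, g (E - c * k) = 0 := by
    intro k
    have : (0:ℝ) ≤ c * k := by positivity
    exact h0 _ (by linarith)
  simp [h]

-- change of variables for the comparison integral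
lemma shift_integral (hmono : Monotone g) (h0 : ∀ x ≤ 0, g x = 0) (hc : 0 < c)
    {E : ℝ} (hE : 0 ≤ E) (M : ℕ) (hM : E - c * M ≤ 0) :
    (∫ t in (0:ℝ)..(M:ℝ), g (E - c * t)) = c⁻¹ * ∫ t in (0:ℝ)..E, g t := by
  have h1 : (∫ t in (0:ℝ)..(M:ℝ), g (E - c * t))
      = c⁻¹ • ∫ s in (c * 0)..(c * M), g (E - s) := by
    exact intervalIntegral.integral_comp_mul_left (fun s => g (E - s)) hc.ne'
  rw [h1]
  rw [mul_zero]
  rw [intervalIntegral.integral_comp_sub_left (fun s => g s) E]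
  have hsplit : (∫ s in (E - c * M)..E, g s)
      = (∫ s in (E - c * M)..(0:ℝ), g s) + ∫ s in (0:ℝ)..E, g s :=
    (intervalIntegral.integral_add_adjacent_intervals hmono.intervalIntegrable
      hmono.intervalIntegrable).symm
  have hzero : (∫ s in (E - c * M)..(0:ℝ), g s) = 0 := by
    have : Set.EqOn g (fun _ => (0:ℝ)) (Set.uIcc (E - c * M) 0) := by
      intro x hx
      rw [Set.uIcc_of_le hM] at hx
      exact h0 x hx.2
    rw [intervalIntegral.integral_congr this]
    simp
  simp only [sub_zero, sub_sub_cancel]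
  rw [hsplit, hzero, zero_add, smul_eq_mul]

lemma sum_bounds (hmono : Monotone g) (h0 : ∀ x ≤ 0, g x = 0) (hc : 0 < c)
    {E : ℝ} (hE : 0 ≤ E) :
    c⁻¹ * (∫ t in (0:ℝ)..E, g t) ≤ (∑' k : ℕ, g (E - c * k)) ∧
    (∑' k : ℕ, g (E - c * k)) ≤ g E + c⁻¹ * ∫ t in (0:ℝ)..E, g t := by
  set M : ℕ := ⌈E / c⌉₊ with hMdef
  have hcM : E - c * M ≤ 0 := by
    have h1 : E / c ≤ (M : ℝ) := Nat.le_ceil _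
    have := (div_le_iff₀ hc).1 h1
    nlinarith
  have hcM1 : E - c * ((M : ℝ) + 1) ≤ 0 := by nlinarith
  have hT : (∑' k : ℕ, g (E - c * k)) = ∑ k ∈ Finset.range (M + 1), g (E - c * k) :=
    tsum_eq_sum (vanish_step h0 hc E)
  have hanti : ∀ (N : ℕ), AntitoneOn (fun t : ℝ => g (E - c * t)) (Set.Icc 0 (0 + (N:ℝ))) := by
    intro N x hx y hy hxy
    have h : c * x ≤ c * y := by nlinarith
    simp only []
    exact hmono (by linarith)
  constructor
  · -- lower bound
    have h1 := (hanti (M + 1)).integral_le_sum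
    have h2 : (∫ x in (0:ℝ)..(0 + ((M:ℝ) + 1)), (fun t : ℝ => g (E - c * t)) x)
        = c⁻¹ * ∫ t in (0:ℝ)..E, g t := by
      rw [zero_add]
      have : ((M:ℝ) + 1) = ((M + 1 : ℕ) : ℝ) := by push_cast; ring
      rw [this]
      exact shift_integral hmono h0 hc hE (M + 1) (by push_cast; linarith)
    rw [hT]
    calc c⁻¹ * (∫ t in (0:ℝ)..E, g t) = _ := h2.symm
      _ ≤ ∑ i ∈ Finset.range (M + 1), (fun t : ℝ => g (E - c * t)) (0 + (i:ℝ)) := by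
          convert h1 using 2
          push_cast
          ring_nf
      _ = ∑ k ∈ Finset.range (M + 1), g (E - c * k) := by
          apply Finset.sum_congr rfl
          intro k _
          simp
  · -- upper bound
    have h1 := (hanti M).sum_le_integral
    have h2 : (∫ x in (0:ℝ)..(0 + (M:ℝ)), (fun t : ℝ => g (E - c * t)) x)
        = c⁻¹ * ∫ t in (0:ℝ)..E, g t := by
      rw [zero_add]
      exact shift_integral hmono h0 hc hE M hcM
    rw [hT, Finset.sum_range_succ']
    have h3 : (∑ i ∈ Finset.range M, g (E - c * ((i:ℕ) + 1 : ℕ)))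
        ≤ c⁻¹ * ∫ t in (0:ℝ)..E, g t := by
      rw [← h2]
      calc (∑ i ∈ Finset.range M, g (E - c * ((i:ℕ) + 1 : ℕ)))
          = ∑ i ∈ Finset.range M, (fun t : ℝ => g (E - c * t)) (0 + ((i:ℕ) + 1 : ℕ)) := by
            apply Finset.sum_congr rfl
            intro k _
            push_cast
            ring_nf
        _ ≤ _ := h1
    have h4 : g (E - c * (0:ℕ)) = g E := by norm_num
    rw [h4]
    linarith
end step

lemma tendsto_step {g : ℝ → ℝ} (hmono : Monotone g) (h0 : ∀ x ≤ 0, g x = 0)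
    {α C c : ℝ} (hα : 0 < α) (hc : 0 < c)
    (hlim : Tendsto (fun E => g E / E ^ α) atTop (nhds C)) :
    Tendsto (fun E => (∑' k : ℕ, g (E - c * k)) / E ^ (α + 1)) atTop
      (nhds (C / (c * (α + 1)))) := by
  have hα1 : (0:ℝ) < α + 1 := by linarith
  -- lower comparison function
  have hlower : Tendsto (fun E : ℝ => c⁻¹ * ((∫ t in (0:ℝ)..E, g t) / E ^ (α + 1))) atTop
      (nhds (C / (c * (α + 1)))) := by
    have := (cesaro_int hmono h0 hα hlim).const_mul c⁻¹
    convert this using 2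
    field_simp
  -- g E / E^(α+1) → 0
  have hsmall : Tendsto (fun E : ℝ => g E / E ^ (α + 1)) atTop (nhds 0) := by
    have h1 : Tendsto (fun E : ℝ => (g E / E ^ α) * E⁻¹) atTop (nhds (C * 0)) :=
      hlim.mul tendsto_inv_atTop_zero
    rw [mul_zero] at h1
    apply h1.congr'
    filter_upwards [eventually_gt_atTop (0:ℝ)] with E hE
    rw [Real.rpow_add hE, Real.rpow_one]
    field_simp
  have hupper : Tendsto (fun E : ℝ => g E / E ^ (α + 1)
      + c⁻¹ * ((∫ t in (0:ℝ)..E, g t) / E ^ (α + 1))) atTop (nhds (C / (c * (α + 1)))) := by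
    have := hsmall.add hlower
    rwa [zero_add] at this
  apply tendsto_of_tendsto_of_tendsto_of_le_of_le' hlower hupper
  · filter_upwards [eventually_ge_atTop (1:ℝ)] with E hE1
    have hE : (0:ℝ) ≤ E := by linarith
    have hP : (0:ℝ) < E ^ (α + 1) := rpow_pos_of_pos (by linarith) _
    have hb := (sum_bounds hmono h0 hc hE).1
    rw [← mul_div_assoc]
    gcongr
  · filter_upwards [eventually_ge_atTop (1:ℝ)] with E hE1
    have hE : (0:ℝ) ≤ E := by linarith
    have hP : (0:ℝ) < E ^ (α + 1) := rpow_pos_of_pos (by linarith) _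
    have hb := (sum_bounds hmono h0 hc hE).2
    rw [← mul_div_assoc, ← add_div]
    gcongr

noncomputable def Smul (p : ℝ) : (m : ℕ) → (Fin m → ℝ) → ℝ → ℝ
  | 0, _, E => (max E 0) ^ p
  | (m + 1), b, E => ∑' k : ℕ, Smul p m (b ∘ Fin.succ) (E - 2 * b 0 * k)

lemma S_props (p : ℝ) (hp : 0 < p) :
    ∀ (m : ℕ) (b : Fin m → ℝ), (∀ j, 0 < b j) →
      Monotone (Smul p m b) ∧ (∀ E ≤ 0, Smul p m b E = 0) ∧
      Tendsto (fun E => Smul p m b E / E ^ (p + m)) atTop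
        (nhds ((∏ j, (2 * b j)⁻¹) * (Real.Gamma (p + 1) / Real.Gamma (p + m + 1)))) := by
  intro m
  induction m with
  | zero =>
    intro b _
    refine ⟨?_, ?_, ?_⟩
    · intro x y h
      exact Real.rpow_le_rpow (le_max_right x 0) (max_le_max h le_rfl) hp.le
    · intro E hE
      show (max E 0) ^ p = 0
      rw [max_eq_right hE, Real.zero_rpow hp.ne']
    · simp only [Nat.cast_zero, add_zero, Finset.univ_eq_empty, Finset.prod_empty, one_mul,
        div_self (Real.Gamma_pos_of_pos (by linarith : (0:ℝ) < p + 1)).ne']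
      apply Tendsto.congr' _ tendsto_const_nhds
      filter_upwards [eventually_ge_atTop (1:ℝ)] with E hE
      show (1:ℝ) = (max E 0) ^ p / E ^ p
      rw [max_eq_left (by linarith), div_self (rpow_pos_of_pos (by linarith) p).ne']
  | succ m ih =>
    intro b hb
    have hb' : ∀ j, 0 < (b ∘ Fin.succ) j := fun j => hb _
    obtain ⟨hmono, hzero, htend⟩ := ih (b ∘ Fin.succ) hb'
    have hc : (0:ℝ) < 2 * b 0 := by linarith [hb 0]
    have hα : (0:ℝ) < p + m := by positivity
    have hSdef : Smul p (m + 1) b = fun E => ∑' k : ℕ,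
        Smul p m (b ∘ Fin.succ) (E - 2 * b 0 * k) := rfl
    refine ⟨?_, ?_, ?_⟩
    · rw [hSdef]; exact mono_step hmono hzero hc
    · intro E hE; rw [hSdef]; exact zero_step hzero hE hc
    · have h1 := tendsto_step hmono hzero hα hc htend
      have hexp : ∀ E : ℝ, E ^ (p + ((m + 1 : ℕ) : ℝ)) = E ^ ((p + m) + 1) := by
        intro E; congr 1; push_cast; ring
      have hGamma : Real.Gamma (p + ((m + 1 : ℕ) : ℝ) + 1)
          = (p + m + 1) * Real.Gamma (p + m + 1) := by
        have : p + ((m + 1 : ℕ) : ℝ) + 1 = (p + m + 1) + 1 := by push_cast; ring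
        rw [this, Real.Gamma_add_one (show (0:ℝ) < p + (m:ℝ) + 1 by positivity).ne']
      have hconst : (∏ j : Fin (m + 1), (2 * b j)⁻¹)
            * (Real.Gamma (p + 1) / Real.Gamma (p + ((m + 1 : ℕ) : ℝ) + 1))
          = ((∏ j : Fin m, (2 * (b ∘ Fin.succ) j)⁻¹)
            * (Real.Gamma (p + 1) / Real.Gamma (p + m + 1))) / (2 * b 0 * ((p + m) + 1)) := by
        rw [hGamma, Fin.prod_univ_succ]
        have hΓ : Real.Gamma (p + m + 1) ≠ 0 :=
          (Real.Gamma_pos_of_pos (by positivity)).ne'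
        have hb0 : b 0 ≠ 0 := (hb 0).ne'
        have hpm : (p + (m:ℝ) + 1) ≠ 0 := by positivity
        field_simp
        ring
        rfl
      rw [hSdef]
      simp only [hexp, hconst]
      exact h1

lemma summable_multi (p : ℝ) (hp : 0 < p) (m : ℕ) (b : Fin m → ℝ) (hb : ∀ j, 0 < b j) (E : ℝ) :
    Summable (fun ℓ : Fin m → ℕ => (max (E - 2 * ∑ j, b j * (ℓ j : ℝ)) 0) ^ p) := by
  have hs : (Set.univ.pi (fun j : Fin m => Set.Iic ⌈E / (2 * b j)⌉₊)).Finite :=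
    Set.Finite.pi (fun j => Set.finite_Iic _)
  apply summable_of_ne_finset_zero (s := hs.toFinset)
  intro ℓ hℓ
  have hmem : ℓ ∉ Set.univ.pi (fun j : Fin m => Set.Iic ⌈E / (2 * b j)⌉₊) := by
    intro h
    exact hℓ (hs.mem_toFinset.2 h)
  simp only [Set.mem_pi, Set.mem_univ, Set.mem_Iic, forall_true_left, not_forall, not_le]
    at hmem
  obtain ⟨j, hj⟩ := hmem
  have h1 : E / (2 * b j) ≤ (⌈E / (2 * b j)⌉₊ : ℝ) := Nat.le_ceil _
  have h2 : ((⌈E / (2 * b j)⌉₊ : ℝ) + 1) ≤ (ℓ j : ℝ) := by exact_mod_cast hj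
  have hbj : (0:ℝ) < 2 * b j := by linarith [hb j]
  have h3 : E < 2 * b j * (ℓ j : ℝ) := by
    have : E / (2 * b j) < (ℓ j : ℝ) := by linarith
    calc E = (E / (2 * b j)) * (2 * b j) := by rw [div_mul_cancel₀ _ hbj.ne']
      _ < (ℓ j : ℝ) * (2 * b j) := by nlinarith
      _ = 2 * b j * (ℓ j : ℝ) := by ring
  have h4 : b j * (ℓ j : ℝ) ≤ ∑ i, b i * (ℓ i : ℝ) := by
    apply Finset.single_le_sum (fun i _ => ?_) (Finset.mem_univ j)
    have := (hb i).le
    positivity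
  have h5 : E - 2 * ∑ i, b i * (ℓ i : ℝ) ≤ 0 := by linarith
  rw [max_eq_right h5, Real.zero_rpow hp.ne']

lemma S_eq (p : ℝ) (hp : 0 < p) :
    ∀ (m : ℕ) (b : Fin m → ℝ), (∀ j, 0 < b j) → ∀ E : ℝ,
      Smul p m b E = ∑' ℓ : Fin m → ℕ, (max (E - 2 * ∑ j, b j * (ℓ j : ℝ)) 0) ^ p := by
  intro m
  induction m with
  | zero =>
    intro b _ E
    rw [tsum_eq_single (fun _ => 0) (fun b' hb' => absurd (Subsingleton.elim b' _) hb')]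
    simp [Smul]
  | succ m ih =>
    intro b hb E
    have hb' : ∀ j, 0 < (b ∘ Fin.succ) j := fun j => hb _
    set f : (Fin (m + 1) → ℕ) → ℝ :=
      fun ℓ => (max (E - 2 * ∑ j, b j * (ℓ j : ℝ)) 0) ^ p with hf
    have harg : ∀ (k : ℕ) (ℓ' : Fin m → ℕ),
        E - 2 * ∑ j, b j * ((Fin.cons k ℓ' : Fin (m + 1) → ℕ) j : ℝ)
          = (E - 2 * b 0 * k) - 2 * ∑ j, (b ∘ Fin.succ) j * (ℓ' j : ℝ) := by
      intro k ℓ'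
      rw [Fin.sum_univ_succ]
      simp only [Fin.cons_zero, Fin.cons_succ, Function.comp_apply]
      ring
    set e : ℕ × (Fin m → ℕ) ≃ (Fin (m + 1) → ℕ) := Fin.consEquiv (fun _ => ℕ) with hedef
    have he : ∀ q : ℕ × (Fin m → ℕ), e q = Fin.cons q.1 q.2 := fun q => by obtain ⟨k, l⟩ := q; rfl
    have hsum : Summable (fun q : ℕ × (Fin m → ℕ) => f (e q)) :=
      (Equiv.summable_iff e).2 (summable_multi p hp (m + 1) b hb E)
    have hfiber : ∀ k : ℕ, Summable (fun ℓ' : Fin m → ℕ => f (e (k, ℓ'))) := by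
      intro k
      apply Summable.congr (summable_multi p hp m (b ∘ Fin.succ) hb' (E - 2 * b 0 * k))
      intro ℓ'
      rw [hf]
      simp only [he, harg]
    calc Smul p (m + 1) b E
        = ∑' k : ℕ, Smul p m (b ∘ Fin.succ) (E - 2 * b 0 * k) := rfl
      _ = ∑' k : ℕ, ∑' ℓ' : Fin m → ℕ, f (e (k, ℓ')) := by
          apply tsum_congr
          intro k
          rw [ih (b ∘ Fin.succ) hb' (E - 2 * b 0 * k)]
          apply tsum_congr
          intro ℓ'
          rw [hf]
          simp only [he, harg]
      _ = ∑' q : ℕ × (Fin m → ℕ), f (e q) := (Summable.tsum_prod' hsum hfiber).symm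
      _ = ∑' ℓ : Fin (m + 1) → ℕ, f ℓ := e.tsum_eq f

/-- With `N₀(E) = (b₁⋯b_m/(2π)^m)(ω_n/(2π)^n) Σ_{ℓ∈ℤ₊^m} (E − 2Σ_j b_j ℓ_j)_+^{n/2}`
(for `m ≥ 1`, `n ≥ 1`), one has `lim_{E→∞} E^{−d/2} N₀(E) = ω_d/(2π)^d` with
`d = 2m + n`: the semiclassical coefficient is independent of the magnetic field. -/
theorem stmt15 (m n : ℕ) (hm : 1 ≤ m) (hn : 1 ≤ n)
    (b : Fin m → ℝ) (hb : ∀ j, 0 < b j)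
    (hbmono : ∀ i j : Fin m, i ≤ j → b j ≤ b i) :
    Tendsto (fun E : ℝ =>
      ((∏ j, b j) / (2 * π) ^ m * (unitBallVol n / (2 * π) ^ n)
        * ∑' ℓ : Fin m → ℕ,
            (max (E - 2 * ∑ j, b j * (ℓ j : ℝ)) 0) ^ ((n : ℝ) / 2))
      / E ^ (((2 * m + n : ℕ) : ℝ) / 2)) atTop
      (nhds (unitBallVol (2 * m + n) / (2 * π) ^ (2 * m + n))) := by
  have hn0 : (0:ℝ) < (n:ℝ) := by exact_mod_cast Nat.lt_of_lt_of_le Nat.zero_lt_one hn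
  have hq : ((2 * m + n : ℕ) : ℝ) / 2 = (n:ℝ)/2 + m := by push_cast; ring
  set p : ℝ := (n:ℝ)/2 with hpdef
  have hp : 0 < p := by positivity
  obtain ⟨-, -, htend⟩ := S_props p hp m b hb
  have hSeq := S_eq p hp m b hb
  set K : ℝ := (∏ j, b j) / (2 * π) ^ m * (unitBallVol n / (2 * π) ^ n) with hKdef
  have hmain : Tendsto (fun E : ℝ => K * (Smul p m b E / E ^ (p + m))) atTop
      (nhds (K * ((∏ j, (2 * b j)⁻¹) * (Real.Gamma (p + 1) / Real.Gamma (p + m + 1))))) :=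
    htend.const_mul K
  have hπ : (0:ℝ) < π := pi_pos
  have hΓ1 : (0:ℝ) < Real.Gamma (p + 1) := Real.Gamma_pos_of_pos (by positivity)
  have hΓ2 : (0:ℝ) < Real.Gamma (p + (m:ℝ) + 1) := Real.Gamma_pos_of_pos (by positivity)
  have hprod : (∏ j, b j) * ∏ j, (2 * b j)⁻¹ = ((2:ℝ)⁻¹) ^ m := by
    rw [← Finset.prod_mul_distrib]
    rw [Finset.prod_congr rfl (fun j _ => show b j * (2 * b j)⁻¹ = (2:ℝ)⁻¹ by
      have := (hb j).ne'
      field_simp)]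
    simp
  have hub1 : unitBallVol n = π ^ p / Real.Gamma (p + 1) := by
    rw [unitBallVol, hpdef]
  have hub2 : unitBallVol (2 * m + n) = π ^ (p + (m:ℝ)) / Real.Gamma (p + (m:ℝ) + 1) := by
    rw [unitBallVol, hq]
  have hπpow : π ^ (p + (m:ℝ)) = π ^ p * (π:ℝ) ^ m := by
    rw [Real.rpow_add hπ, Real.rpow_natCast]
  have hval : K * ((∏ j, (2 * b j)⁻¹) * (Real.Gamma (p + 1) / Real.Gamma (p + m + 1)))
      = unitBallVol (2 * m + n) / (2 * π) ^ (2 * m + n) := by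
    rw [hub2, hπpow, hKdef, hub1]
    have h1 : (∏ j, b j) / (2 * π) ^ m * (π ^ p / Real.Gamma (p + 1) / (2 * π) ^ n)
          * ((∏ j, (2 * b j)⁻¹) * (Real.Gamma (p + 1) / Real.Gamma (p + (m:ℝ) + 1)))
        = ((∏ j, b j) * ∏ j, (2 * b j)⁻¹)
          * (π ^ p * (Real.Gamma (p + 1) / Real.Gamma (p + 1))
            / ((2 * π) ^ m * (2 * π) ^ n * Real.Gamma (p + (m:ℝ) + 1))) := by
      ring
    have h2 : ((2:ℝ) * π) ^ (2 * m + n) = (2 * π) ^ m * (2 * π) ^ m * (2 * π) ^ n := by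
      rw [← pow_add, ← pow_add]; congr 1; ring
    have h3 : ((2:ℝ)⁻¹) ^ m * (2 * π) ^ m = π ^ m := by
      rw [← mul_pow]; congr 1; field_simp
    rw [h1, hprod, div_self hΓ1.ne', mul_one, mul_div_assoc', div_div,
      div_eq_div_iff (mul_pos (mul_pos (by positivity) (by positivity)) hΓ2).ne'
        (mul_pos hΓ2 (by positivity)).ne', h2]
    linear_combination (π ^ p * Real.Gamma (p + (m:ℝ) + 1) * (2 * π) ^ m * (2 * π) ^ n) * h3
  rw [← hval]
  apply hmain.congr
  intro E
  rw [hq, ← hSeq E, mul_div_assoc]
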